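/- (No-go theorem for local optimality of pTaT, p > 2.) Let p ≥ 3 be an integer, χ > 0, Ω > 0, and let (X, 0, Z) be a point on the unit sphere with Z ≠ 0 satisfying the saddle fixed-point condition χXZ^{p−2} = Ω for the pTaT flow F_pTaT(X,Y,Z) = (−χYZ^{p−1}, χXZ^{p−1} − ΩZ, ΩY). Then the total derivative (Jacobi matrix) of F_pTaT at (X,0,Z) equals the matrix M with rows (0, −χZ^{p−1}, 0), (χZ^{p−1}, 0, (p−2)Ω), (0, Ω, 0), and M is not a symmetric matrix (M ≠ Mᵀ). Consequently, in the sense of the paper — where local optimality of the dynamics at a saddle means that the Jacobi matrix there is real symmetric, so that the principal separatrix directions are orthogonal — there is no value of the control parameter Ω/χ > 0 for which pTaT dynamics with p > 2 is locally optimal. -/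

import Mathlib

open Matrix

lemma hasFDerivAt_fun_pow {E : Type*} [NormedAddCommGroup E] [NormedSpace ℝ E]
    {f : E → ℝ} {f' : E →L[ℝ] ℝ} {x : E} (h : HasFDerivAt f f' x) (n : ℕ) :
    HasFDerivAt (fun q => f q ^ n) (((n : ℝ) * f x ^ (n - 1)) • f') x := by
  induction n with
  | zero => simpa using hasFDerivAt_const (1 : ℝ) x
  | succ n ih =>
    have h2 := ih.mul h
    have heq : ((fun q => f q ^ n) * f) = fun q => f q ^ (n + 1) := by
      funext q; rw [Pi.mul_apply, pow_succ]
    rw [heq] at h2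
    refine h2.congr_fderiv ?_
    ext v
    simp only [ContinuousLinearMap.add_apply, ContinuousLinearMap.smul_apply, smul_eq_mul]
    rcases n with _ | m
    · simp
    · simp only [Nat.succ_sub_one, Nat.cast_succ]
      rw [pow_succ]
      ring

/-- No-go theorem for local optimality of `p`TaT with `p > 2`: at any saddle fixed
point `(X,0,Z)` (on the unit sphere, `Z ≠ 0`, `χXZ^{p−2} = Ω`) the Jacobi matrix of
the `p`TaT flow equals the matrix `M` with rows `(0, −χZ^{p−1}, 0)`,
`(χZ^{p−1}, 0, (p−2)Ω)`, `(0, Ω, 0)`, and `M` is not symmetric; hence (in the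
paper's sense of local optimality, which requires a real symmetric Jacobi matrix at
the saddle) there is no value of the control parameter `Ω/χ > 0` for which `p`TaT
dynamics with `p > 2` is locally optimal. -/
theorem pTaT_no_local_optimality (p : ℕ) (hp : 3 ≤ p) (χ Ω : ℝ)
    (hχ : 0 < χ) (hΩ : 0 < Ω) (X Z : ℝ) (hZ : Z ≠ 0)
    (hsph : X ^ 2 + 0 ^ 2 + Z ^ 2 = 1)
    (hsaddle : χ * X * Z ^ (p - 2) = Ω)
    (F : ℝ × ℝ × ℝ → ℝ × ℝ × ℝ)
    (hF : F = fun q => (-(χ * q.2.1 * q.2.2 ^ (p - 1)),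
      χ * q.1 * q.2.2 ^ (p - 1) - Ω * q.2.2, Ω * q.2.1))
    (M : Matrix (Fin 3) (Fin 3) ℝ)
    (hM : M = !![0, -(χ * Z ^ (p - 1)), 0;
                 χ * Z ^ (p - 1), 0, ((p : ℝ) - 2) * Ω;
                 0, Ω, 0]) :
    (∀ v : ℝ × ℝ × ℝ, fderiv ℝ F (X, 0, Z) v =
      (-(χ * Z ^ (p - 1)) * v.2.1,
       χ * Z ^ (p - 1) * v.1 + ((p : ℝ) - 2) * Ω * v.2.2,
       Ω * v.2.1)) ∧
    M ≠ Mᵀ := by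
  constructor
  · have hx : HasFDerivAt (fun q : ℝ × ℝ × ℝ => q.1)
        (ContinuousLinearMap.fst ℝ ℝ (ℝ × ℝ)) (X, 0, Z) := hasFDerivAt_fst
    have hy : HasFDerivAt (fun q : ℝ × ℝ × ℝ => q.2.1)
        ((ContinuousLinearMap.fst ℝ ℝ ℝ).comp (ContinuousLinearMap.snd ℝ ℝ (ℝ × ℝ)))
        (X, 0, Z) := hasFDerivAt_fst.comp _ hasFDerivAt_snd
    have hz : HasFDerivAt (fun q : ℝ × ℝ × ℝ => q.2.2)
        ((ContinuousLinearMap.snd ℝ ℝ ℝ).comp (ContinuousLinearMap.snd ℝ ℝ (ℝ × ℝ)))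
        (X, 0, Z) := hasFDerivAt_snd.comp _ hasFDerivAt_snd
    have hzpow := hasFDerivAt_fun_pow hz (p - 1)
    have h1 := (((hasFDerivAt_const χ _).mul hy).mul hzpow).neg
    have h2 := (((hasFDerivAt_const χ _).mul hx).mul hzpow).sub
      ((hasFDerivAt_const Ω _).mul hz)
    have h3 := (hasFDerivAt_const Ω _).mul hy
    have h := HasFDerivAt.prodMk h1 (HasFDerivAt.prodMk h2 h3)
    subst hF
    have heq : fderiv ℝ (fun q : ℝ × ℝ × ℝ => (-(χ * q.2.1 * q.2.2 ^ (p - 1)),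
        χ * q.1 * q.2.2 ^ (p - 1) - Ω * q.2.2, Ω * q.2.1)) (X, 0, Z) = _ := h.fderiv
    intro v
    rw [heq]
    have hcast : ((p - 1 : ℕ) : ℝ) = (p : ℝ) - 1 := by
      rw [Nat.cast_sub (by omega)]; norm_num
    have hsub : p - 1 - 1 = p - 2 := by omega
    have hsub2 : p - 1 = (p - 2) + 1 := by omega
    simp only [ContinuousLinearMap.prod_apply, ContinuousLinearMap.neg_apply,
      ContinuousLinearMap.sub_apply, ContinuousLinearMap.add_apply,
      ContinuousLinearMap.smul_apply, ContinuousLinearMap.comp_apply,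
      ContinuousLinearMap.coe_fst', ContinuousLinearMap.coe_snd', smul_eq_mul,
      ContinuousLinearMap.zero_apply, mul_zero, add_zero, hcast, hsub]
    refine Prod.ext ?_ (Prod.ext ?_ ?_)
    · simp; ring
    · simp only [Pi.mul_apply]
      linear_combination ((p : ℝ) - 1) * v.2.2 * hsaddle
    · simp
  · intro h
    have h01 : M 0 1 = M 1 0 := by conv_lhs => rw [h, Matrix.transpose_apply]
    rw [hM] at h01
    have h01' : -(χ * Z ^ (p - 1)) = χ * Z ^ (p - 1) := by
      simpa using h01
    have hne : χ * Z ^ (p - 1) ≠ 0 := mul_ne_zero (ne_of_gt hχ) (pow_ne_zero _ hZ)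
    exact hne (by linarith)
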